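/- Let R ∈ ℝ^m with R ≤ 0 and let i ∈ Fin n. Then the set {α ∈ ℝ : R + αB ê_i ≤ 0} has a minimum, and this minimum equals max_{j ∈ U_i} R^j / (1 − γF^j_i) (note that 1 − γF^j_i > 0 since γ < 1 and F^j_i ≤ 1). In other words, the i-th component of the safe reward-balancing control law is the least scalar α for which the single-coordinate update R + αB ê_i preserves nonpositivity of the reward. -/

import Mathlib

open Matrix MeasureTheory Filter Topology

noncomputable section

/-- The policy matrix `Π` of a deterministic policy `π`. -/
def polMat {n m : ℕ} (π : Fin n → Fin m) : Matrix (Fin n) (Fin m) ℝ :=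
  Matrix.of fun i j => if j = π i then 1 else 0

/-- The matrix `S` with `S^j_i = 1` iff `s j = i`. -/
def projMat {n m : ℕ} (s : Fin m → Fin n) : Matrix (Fin m) (Fin n) ℝ :=
  Matrix.of fun j i => if s j = i then 1 else 0

/-- A row-stochastic matrix: nonnegative entries, rows summing to one. -/
def RowStochastic {n m : ℕ} (F : Matrix (Fin m) (Fin n) ℝ) : Prop :=
  (∀ j i, 0 ≤ F j i) ∧ ∀ j, ∑ i, F j i = 1

/-- A deterministic policy: a section of the state projection `s`. -/
def IsPolicy {n m : ℕ} (s : Fin m → Fin n) (π : Fin n → Fin m) : Prop :=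
  ∀ i, s (π i) = i

/-- The value vector `V_{π,R} = (I − γΠF)⁻¹ Π R`. -/
def valueVec {n m : ℕ} (γ : ℝ) (F : Matrix (Fin m) (Fin n) ℝ)
    (π : Fin n → Fin m) (R : Fin m → ℝ) : Fin n → ℝ :=
  ((1 : Matrix (Fin n) (Fin n) ℝ) - γ • (polMat π * F))⁻¹ *ᵥ (polMat π *ᵥ R)

/-- A policy is optimal for `R` when its value vector dominates all others componentwise. -/
def IsOptimal {n m : ℕ} (s : Fin m → Fin n) (γ : ℝ) (F : Matrix (Fin m) (Fin n) ℝ)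
    (R : Fin m → ℝ) (π : Fin n → Fin m) : Prop :=
  IsPolicy s π ∧ ∀ π', IsPolicy s π' → ∀ i, valueVec γ F π' R i ≤ valueVec γ F π R i

/-- `hmax R i = max_{j ∈ U_i} R j`. -/
def hmax {n m : ℕ} (s : Fin m → Fin n) (R : Fin m → ℝ) (i : Fin n) : ℝ :=
  sSup {x | ∃ j, s j = i ∧ R j = x}


/-- For `R ≤ 0` and a state `i`, the set of scalars `α` for which the
single-coordinate update `R + α B êᵢ` stays nonpositive has a minimum, equal to
`max_{j ∈ U_i} R j / (1 − γ F j i)`: the `i`-th component of safe reward-balancing. -/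
theorem safe_reward_balancing_component {n m : ℕ} (hn : 1 ≤ n) (hm : 1 ≤ m)
    (s : Fin m → Fin n) (hs : Function.Surjective s)
    (γ : ℝ) (hγ0 : 0 ≤ γ) (hγ1 : γ < 1)
    (F : Matrix (Fin m) (Fin n) ℝ) (hF : RowStochastic F)
    (R : Fin m → ℝ) (hR : R ≤ 0) (i : Fin n) :
    IsLeast {α : ℝ | R + α • ((γ • F - projMat s) *ᵥ Pi.single i 1) ≤ 0}
      (sSup {x : ℝ | ∃ j, s j = i ∧ R j / (1 - γ * F j i) = x}) := by
  set T := {x : ℝ | ∃ j, s j = i ∧ R j / (1 - γ * F j i) = x} with hT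
  have hpos : ∀ j, 0 < 1 - γ * F j i := by
    intro j
    have hle : F j i ≤ 1 := by
      rw [← hF.2 j]
      exact Finset.single_le_sum (fun k _ => hF.1 j k) (Finset.mem_univ i)
    nlinarith [hF.1 j i]
  have hTfin : T.Finite := by
    apply (Set.finite_range (fun j => R j / (1 - γ * F j i))).subset
    rintro x ⟨j, hj, rfl⟩; exact ⟨j, rfl⟩
  have hTne : T.Nonempty := by
    obtain ⟨j, hj⟩ := hs i
    exact ⟨R j / (1 - γ * F j i), j, hj, rfl⟩
  have hmem : sSup T ∈ T := hTne.csSup_mem hTfin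
  have hnonpos : sSup T ≤ 0 := by
    obtain ⟨j, hj, hx⟩ := hmem
    rw [← hx]
    exact div_nonpos_of_nonpos_of_nonneg (hR j) (hpos j).le
  have hvec : ∀ j, ((γ • F - projMat s) *ᵥ Pi.single i 1) j
      = γ * F j i - (if s j = i then 1 else 0) := by
    intro j
    simp [Matrix.mulVec, dotProduct, Pi.single_apply, projMat,
      Finset.sum_sub_distrib, mul_ite, Matrix.sub_apply, Matrix.smul_apply]
  constructor
  · intro j
    have hb := hvec j
    simp only [Pi.add_apply, Pi.smul_apply, smul_eq_mul, Pi.zero_apply, hb]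
    by_cases h : s j = i
    · rw [if_pos h]
      have : R j / (1 - γ * F j i) ≤ sSup T :=
        le_csSup hTfin.bddAbove ⟨j, h, rfl⟩
      have := (div_le_iff₀ (hpos j)).mp this
      nlinarith
    · rw [if_neg h]
      have : sSup T * (γ * F j i) ≤ 0 :=
        mul_nonpos_of_nonpos_of_nonneg hnonpos (mul_nonneg hγ0 (hF.1 j i))
      have := hR j
      simp only [Pi.zero_apply] at this
      nlinarith [hR j, this]
  · intro α hα
    apply csSup_le hTne
    rintro x ⟨j, hj, rfl⟩
    have h := hα j
    simp only [Pi.add_apply, Pi.smul_apply, smul_eq_mul, Pi.zero_apply, hvec j,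
      if_pos hj] at h
    rw [div_le_iff₀ (hpos j)]
    nlinarith
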